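/- There is no coupling of T₃ and T₄ (conditioned Galton–Watson trees with the offspring distribution p₀=p₂=(1-ε)/2, p₁=ε, 0<ε<1/3) such that T₃ ⊆ T₄ almost surely. -/

import Mathlib

/-- Rooted ordered (plane) trees in which every vertex has at most two children. -/
inductive BTree where
  | leaf : BTree
  | one  : BTree → BTree
  | two  : BTree → BTree → BTree
deriving DecidableEq

namespace BTree

/-- Number of vertices. -/
def size : BTree → ℕ
  | leaf => 1
  | one t => 1 + size t
  | two s t => 1 + size s + size t

/-- The Galton–Watson probability of a finite tree: the product over all vertices v
of p_{d(v)}, where d(v) is the outdegree of v. -/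
noncomputable def gwProb (p : ℕ → ℝ) : BTree → ℝ
  | leaf => p 0
  | one t => p 1 * gwProb p t
  | two s t => p 2 * gwProb p s * gwProb p t

/-- `W k t` is the number of vertices of `t` at distance `k` from the root (the profile). -/
def W : ℕ → BTree → ℕ
  | 0, _ => 1
  | _+1, leaf => 0
  | k+1, one t => W k t
  | k+1, two s t => W k s + W k t

end BTree

/-- The offspring distribution p₀ = (1-ε)/2, p₁ = ε, p₂ = (1-ε)/2. -/
noncomputable def offspring (ε : ℝ) : ℕ → ℝ :=
  fun n => if n = 0 then (1 - ε) / 2 else if n = 1 then ε else if n = 2 then (1 - ε) / 2 else 0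

open BTree MeasureTheory

/-- `IsSubtree s t`: the rooted plane tree `s` is a root-preserving subtree of `t`. -/
inductive IsSubtree : BTree → BTree → Prop
  | leaf (t : BTree) : IsSubtree .leaf t
  | one {s t : BTree} : IsSubtree s t → IsSubtree (.one s) (.one t)
  | oneLeft {s t₁ t₂ : BTree} : IsSubtree s t₁ → IsSubtree (.one s) (.two t₁ t₂)
  | oneRight {s t₁ t₂ : BTree} : IsSubtree s t₂ → IsSubtree (.one s) (.two t₁ t₂)
  | two {s₁ s₂ t₁ t₂ : BTree} : IsSubtree s₁ t₁ → IsSubtree s₂ t₂ → IsSubtree (.two s₁ s₂) (.two t₁ t₂)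

/-- Total Galton–Watson probability of all trees with `n` vertices. -/
noncomputable def Z (ε : ℝ) (n : ℕ) : ℝ :=
  ∑' t : BTree, if size t = n then gwProb (offspring ε) t else 0

/- ### Auxiliary material -/

/-- An injective encoding of `BTree` into `ℕ`. -/
def BTree.enc : BTree → ℕ
  | .leaf => 0
  | .one t => Nat.pair 0 (BTree.enc t) + 1
  | .two s t => Nat.pair 1 (Nat.pair (BTree.enc s) (BTree.enc t)) + 1

lemma BTree.enc_inj : Function.Injective BTree.enc := by
  intro a
  induction a with
  | leaf => intro b hb; cases b <;> simp [BTree.enc] at hb ⊢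
  | one t ih =>
    intro b hb
    cases b with
    | leaf => simp [BTree.enc] at hb
    | one u => simp [BTree.enc, Nat.pair_eq_pair] at hb; rw [ih hb]
    | two u v => simp [BTree.enc, Nat.pair_eq_pair] at hb
  | two s t ihs iht =>
    intro b hb
    cases b with
    | leaf => simp [BTree.enc] at hb
    | one u => simp [BTree.enc, Nat.pair_eq_pair] at hb
    | two u v =>
      simp [BTree.enc, Nat.pair_eq_pair] at hb
      rw [ihs hb.1, iht hb.2]

instance : Countable BTree := ⟨⟨BTree.enc, BTree.enc_inj⟩⟩

lemma BTree.size_pos (t : BTree) : 1 ≤ size t := by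
  cases t <;> simp [size] <;> omega

lemma BTree.size_eq_one {t : BTree} (h : size t = 1) : t = .leaf := by
  cases t with
  | leaf => rfl
  | one u => have := size_pos u; simp [size] at h; omega
  | two u v => have := size_pos u; have := size_pos v; simp [size] at h; omega

lemma BTree.size_eq_two {t : BTree} (h : size t = 2) : t = .one .leaf := by
  cases t with
  | leaf => simp [size] at h
  | one u =>
    simp [size] at h
    have hu : size u = 1 := by omega
    rw [size_eq_one hu]
  | two u v => have := size_pos u; have := size_pos v; simp [size] at h; omega

lemma BTree.size_eq_three {t : BTree} (h : size t = 3) :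
    t = .one (.one .leaf) ∨ t = .two .leaf .leaf := by
  cases t with
  | leaf => simp [size] at h
  | one u =>
    simp [size] at h
    have hu : size u = 2 := by omega
    left; rw [size_eq_two hu]
  | two u v =>
    have h1 := size_pos u; have h2 := size_pos v
    simp [size] at h
    right
    have hu : size u = 1 := by omega
    have hv : size v = 1 := by omega
    rw [size_eq_one hu, size_eq_one hv]

lemma BTree.size_eq_four {t : BTree} (h : size t = 4) :
    t = .one (.one (.one .leaf)) ∨ t = .one (.two .leaf .leaf) ∨
    t = .two (.one .leaf) .leaf ∨ t = .two .leaf (.one .leaf) := by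
  cases t with
  | leaf => simp [size] at h
  | one u =>
    simp [size] at h
    have hu : size u = 3 := by omega
    rcases size_eq_three hu with h' | h' <;> subst h' <;> simp
  | two u v =>
    have h1 := size_pos u; have h2 := size_pos v
    simp [size] at h
    rcases (by omega : size u = 1 ∧ size v = 2 ∨ size u = 2 ∧ size v = 1) with ⟨hu, hv⟩ | ⟨hu, hv⟩
    · rw [size_eq_one hu, size_eq_two hv]; simp
    · rw [size_eq_two hu, size_eq_one hv]; simp

lemma Z3_eq (ε : ℝ) : Z ε 3 = ε ^ 2 * (1 - ε) / 2 + (1 - ε) ^ 3 / 8 := by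
  have h : ∀ t : BTree,
      t ∉ ({.one (.one .leaf), .two .leaf .leaf} : Finset BTree) →
      (if size t = 3 then gwProb (offspring ε) t else 0) = 0 := by
    intro t ht
    simp only [Finset.mem_insert, Finset.mem_singleton] at ht
    rw [if_neg]
    intro h3
    rcases BTree.size_eq_three h3 with h' | h' <;> simp [h'] at ht
  rw [Z, tsum_eq_sum h, Finset.sum_pair (by decide)]
  simp [size, gwProb, offspring]
  ring

lemma Z4_eq (ε : ℝ) : Z ε 4 = ε ^ 3 * (1 - ε) / 2 + 3 * ε * (1 - ε) ^ 3 / 8 := by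
  have h : ∀ t : BTree,
      t ∉ ({.one (.one (.one .leaf)), .one (.two .leaf .leaf),
            .two (.one .leaf) .leaf, .two .leaf (.one .leaf)} : Finset BTree) →
      (if size t = 4 then gwProb (offspring ε) t else 0) = 0 := by
    intro t ht
    simp only [Finset.mem_insert, Finset.mem_singleton] at ht
    rw [if_neg]
    intro h4
    rcases BTree.size_eq_four h4 with h' | h' | h' | h' <;> simp [h'] at ht
  rw [Z, tsum_eq_sum h]
  rw [Finset.sum_insert (by decide), Finset.sum_insert (by decide),
    Finset.sum_insert (by decide), Finset.sum_singleton]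
  simp [size, gwProb, offspring]
  ring

lemma key_ineq (ε : ℝ) (hε0 : 0 < ε) (hε1 : ε < 1 / 3) :
    ε * (1 - ε) ^ 3 / 8 / Z ε 4 + ε * (1 - ε) ^ 3 / 8 / Z ε 4 <
      (1 - ε) ^ 3 / 8 / Z ε 3 := by
  have h1 : 0 < 1 - ε := by linarith
  have h13 : 0 < 1 - 3 * ε := by linarith
  have hZ3 : 0 < Z ε 3 := by
    rw [Z3_eq]; positivity
  have hZ4 : 0 < Z ε 4 := by
    rw [Z4_eq]; positivity
  rw [← add_div, div_lt_div_iff₀ hZ4 hZ3, Z3_eq, Z4_eq]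
  nlinarith [mul_pos (mul_pos (mul_pos hε0 (pow_pos h1 4)) h13) (by linarith : (0:ℝ) < 1 + ε)]

/-- For 0 < ε < 1/3 there is no coupling of the conditioned Galton–Watson trees T₃ and
T₄ (offspring distribution p₀ = p₂ = (1-ε)/2, p₁ = ε) with T₃ ⊆ T₄ almost surely. -/
theorem no_coupling_T3_T4 (ε : ℝ) (hε0 : 0 < ε) (hε1 : ε < 1 / 3) :
    ¬ ∃ (Ω : Type) (_ : MeasurableSpace Ω) (μ : Measure Ω) (_ : IsProbabilityMeasure μ)
        (S T : Ω → BTree),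
      (∀ t : BTree, μ {ω | S ω = t} =
        ENNReal.ofReal (if size t = 3 then gwProb (offspring ε) t / Z ε 3 else 0)) ∧
      (∀ t : BTree, μ {ω | T ω = t} =
        ENNReal.ofReal (if size t = 4 then gwProb (offspring ε) t / Z ε 4 else 0)) ∧
      (∀ᵐ ω ∂μ, IsSubtree (S ω) (T ω)) := by
  rintro ⟨Ω, mΩ, μ, hprob, S, T, hS, hT, hsub⟩
  have h1 : 0 < 1 - ε := by linarith
  have hZ3 : 0 < Z ε 3 := by rw [Z3_eq]; positivity
  have hZ4 : 0 < Z ε 4 := by rw [Z4_eq]; positivity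
  set ch : BTree := .two .leaf .leaf with hch
  set tA : BTree := .two (.one .leaf) .leaf with htA
  set tB : BTree := .two .leaf (.one .leaf) with htB
  have hnull : μ {ω | ¬ IsSubtree (S ω) (T ω)} = 0 := by
    rw [MeasureTheory.ae_iff] at hsub; exact hsub
  -- the bad event: T is two-shaped but neither tA nor tB
  have hbad : μ {ω | (∃ u v, T ω = BTree.two u v) ∧ T ω ≠ tA ∧ T ω ≠ tB} = 0 := by
    have heq : {ω | (∃ u v, T ω = BTree.two u v) ∧ T ω ≠ tA ∧ T ω ≠ tB} =
        ⋃ t : {t : BTree // (∃ u v, t = BTree.two u v) ∧ t ≠ tA ∧ t ≠ tB},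
          {ω | T ω = (t : BTree)} := by
      ext ω
      simp only [Set.mem_setOf_eq, Set.mem_iUnion]
      constructor
      · rintro ⟨h₁, h₂, h₃⟩; exact ⟨⟨T ω, h₁, h₂, h₃⟩, rfl⟩
      · rintro ⟨⟨t, h₁, h₂, h₃⟩, ht⟩; rw [ht]; exact ⟨h₁, h₂, h₃⟩
    rw [heq]
    apply measure_iUnion_null
    rintro ⟨t, ⟨u, v, huv⟩, h₂, h₃⟩
    rw [hT t, if_neg, ENNReal.ofReal_zero]
    intro h4
    rcases BTree.size_eq_four h4 with h' | h' | h' | h' <;>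
      first
        | exact h₂ h'
        | exact h₃ h'
        | (rw [h'] at huv; exact absurd huv (by simp))
  have hsubset : {ω | S ω = ch} ⊆
      ({ω | T ω = tA} ∪ {ω | T ω = tB}) ∪
      ({ω | ¬ IsSubtree (S ω) (T ω)} ∪
        {ω | (∃ u v, T ω = BTree.two u v) ∧ T ω ≠ tA ∧ T ω ≠ tB}) := by
    intro ω hω
    by_cases hs : IsSubtree (S ω) (T ω)
    · rw [Set.mem_setOf_eq.mp hω, hch] at hs
      obtain ⟨u, v, huv⟩ : ∃ u v, T ω = BTree.two u v := by
        generalize hq : T ω = q at hs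
        cases hs with
        | two h₁ h₂ => exact ⟨_, _, rfl⟩
      by_cases hA : T ω = tA
      · exact Or.inl (Or.inl hA)
      by_cases hB : T ω = tB
      · exact Or.inl (Or.inr hB)
      · exact Or.inr (Or.inr ⟨⟨u, v, huv⟩, hA, hB⟩)
    · exact Or.inr (Or.inl hs)
  have hle : μ {ω | S ω = ch} ≤ μ {ω | T ω = tA} + μ {ω | T ω = tB} := by
    calc μ {ω | S ω = ch}
        ≤ μ (({ω | T ω = tA} ∪ {ω | T ω = tB}) ∪
            ({ω | ¬ IsSubtree (S ω) (T ω)} ∪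
              {ω | (∃ u v, T ω = BTree.two u v) ∧ T ω ≠ tA ∧ T ω ≠ tB})) :=
          measure_mono hsubset
      _ ≤ μ ({ω | T ω = tA} ∪ {ω | T ω = tB}) +
            μ ({ω | ¬ IsSubtree (S ω) (T ω)} ∪
              {ω | (∃ u v, T ω = BTree.two u v) ∧ T ω ≠ tA ∧ T ω ≠ tB}) :=
          measure_union_le _ _
      _ ≤ (μ {ω | T ω = tA} + μ {ω | T ω = tB}) +
            (μ {ω | ¬ IsSubtree (S ω) (T ω)} +
              μ {ω | (∃ u v, T ω = BTree.two u v) ∧ T ω ≠ tA ∧ T ω ≠ tB}) :=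
          add_le_add (measure_union_le _ _) (measure_union_le _ _)
      _ = μ {ω | T ω = tA} + μ {ω | T ω = tB} := by rw [hnull, hbad, add_zero, add_zero]
  rw [hS ch, hT tA, hT tB] at hle
  rw [if_pos (by decide), if_pos (by decide), if_pos (by decide)] at hle
  have hgch : gwProb (offspring ε) ch = (1 - ε) ^ 3 / 8 := by
    simp [hch, gwProb, offspring]; ring
  have hgA : gwProb (offspring ε) tA = ε * (1 - ε) ^ 3 / 8 := by
    simp [htA, gwProb, offspring]; ring
  have hgB : gwProb (offspring ε) tB = ε * (1 - ε) ^ 3 / 8 := by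
    simp [htB, gwProb, offspring]; ring
  rw [hgch, hgA, hgB] at hle
  have hnn : 0 ≤ ε * (1 - ε) ^ 3 / 8 / Z ε 4 := by positivity
  rw [← ENNReal.ofReal_add hnn hnn] at hle
  have := (ENNReal.ofReal_le_ofReal_iff (by positivity)).mp hle
  exact absurd this (not_le.mpr (key_ineq ε hε0 hε1))
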